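/- arXiv:2003.00964 — 2 statements merged into one kernel-verified Lean document; each statement's English description precedes it below -/
import Mathlib

section
/- Let G be a finite simple graph without self-loops on vertex set V = {1,…,n}, and let T be a random treatment vector distributed uniformly over all assignments in {0,1}^n with exactly n⁽¹⁾ treated units, where 0 < n⁽¹⁾ < n. For each unit i, suppose the observed outcome is Y_i = T_i·τ_i + F(G_{N_i}^T) + ε_i, where τ_i ∈ ℝ is a constant, ε_i is an integrable random variable independent of T with E[ε_i] = α, and F is a real-valued function on vertex-labeled graphs invariant under label-preserving isomorphism. Fix for each i a vertex-labeled graph g_i such that the events {G_{N_i}^T ≃ g_i, T_i = 1} and {G_{N_i}^T ≃ g_i, T_i = 0} have positive probability. Then (1/n⁽¹⁾) Σ_{i=1}^n E[ T_i · ( E[Y_i | G_{N_i}^T ≃ g_i, T_i = 1] − E[Y_i | G_{N_i}^T ≃ g_i, T_i = 0] ) ] = (1/n) Σ_{i=1}^n E[Y_i(1, 0_{−i}) − Y_i(0, 0_{−i})], where Y_i(t) = t_i·τ_i + F(G_{N_i}^t) + ε_i denotes potential outcomes; i.e., the average direct effect is identified by the matched conditional contrasts. -/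
structure LGraph (V : Type) where
  verts : Set V
  Adj : V → V → Prop
  symm : ∀ a b, Adj a b → Adj b a
  loopless : ∀ a, ¬ Adj a a
  mem_of_adj : ∀ a b, Adj a b → a ∈ verts ∧ b ∈ verts
  label : verts → Bool

/-- Label-preserving graph isomorphism between vertex-labeled graphs. -/
def LGraph.Iso {V W : Type} (g : LGraph V) (h : LGraph W) : Prop :=
  ∃ e : g.verts ≃ h.verts,
    (∀ a b : g.verts, g.Adj ↑a ↑b ↔ h.Adj ↑(e a) ↑(e b)) ∧
    (∀ a : g.verts, g.label a = h.label (e a))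

/-- The labeled neighborhood graph of unit `i`: subgraph of `G` induced by the
neighbors of `i`, with vertices labeled by the treatment `t`. -/
def nbhdGraph {V : Type} (G : SimpleGraph V) (t : V → Bool) (i : V) : LGraph V where
  verts := G.neighborSet i
  Adj a b := G.Adj a b ∧ a ∈ G.neighborSet i ∧ b ∈ G.neighborSet i
  symm _ _ h := ⟨h.1.symm, h.2.2, h.2.1⟩
  loopless a h := G.loopless.irrefl a h.1
  mem_of_adj _ _ h := h.2
  label v := t v.1

def b2r (b : Bool) : ℝ := if b then 1 else 0

/-- `g'` is a subgraph of `g` (vertex subset, edge subset, labels agree). -/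
def LGraph.IsSubgraph {V : Type} (g' g : LGraph V) : Prop :=
  g'.verts ⊆ g.verts ∧
  (∀ a b, g'.Adj a b → g.Adj a b) ∧
  (∀ (v : V) (h' : v ∈ g'.verts) (h : v ∈ g.verts), g'.label ⟨v, h'⟩ = g.label ⟨v, h⟩)

/-- Label-preserving isomorphism classes of vertex-labeled graphs on `V`. -/
def LClass (V : Type) := Quot (@LGraph.Iso V V)

/-- `subCount c g`: the number of subgraphs of `g` in the labeled isomorphism class `c`. -/
noncomputable def subCount {V : Type} (c : LClass V) (g : LGraph V) : ℕ :=
  Nat.card {g' : LGraph V // g'.IsSubgraph g ∧ Quot.mk _ g' = c}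

/-- The weighted Hamming distance between subgraph-count profiles. -/
noncomputable def dw {V : Type} (w : LClass V → ℝ) (g g' : LGraph V) : ℝ :=
  ∑ᶠ c : LClass V, Set.indicator {c' : LClass V | subCount c' g ≠ subCount c' g'} w c

/-- Number of treated units in an assignment. -/
def countTreated {n : ℕ} (t : Fin n → Bool) : ℕ :=
  (Finset.univ.filter fun j => t j = true).card

open MeasureTheory
open scoped ENNReal

/-- Conditional expectation given an event `A`: `E[Y | A] = E[Y·1_A] / P(A)`. -/
noncomputable def condExpEvent {Ω : Type} [MeasurableSpace Ω] (μ : Measure Ω)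
    (A : Set Ω) (Y : Ω → ℝ) : ℝ :=
  (∫ ω in A, Y ω ∂μ) / (μ A).toReal


open MeasureTheory Set
open scoped ENNReal

private lemma key_restrict_integral {Ω : Type} [MeasurableSpace Ω] (μ : Measure Ω)
    [IsProbabilityMeasure μ] (f : Ω → ℝ) (hf : Measurable f) (K : Set Ω)
    (hprod : ∀ B : Set ℝ, MeasurableSet B → μ (f ⁻¹' B ∩ K) = μ (f ⁻¹' B) * μ K) :
    ∫ x in K, f x ∂μ = (∫ x, f x ∂μ) * (μ K).toReal := by
  have hmap : (μ.restrict K).map f = (μ K) • (μ.map f) := by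
    refine Measure.ext fun B hB => ?_
    rw [Measure.map_apply hf hB, Measure.restrict_apply (hf hB), hprod B hB,
      Measure.smul_apply, Measure.map_apply hf hB, smul_eq_mul, mul_comm]
  have h1 : ∫ x in K, f x ∂μ = ∫ y, y ∂((μ.restrict K).map f) :=
    (integral_map hf.aemeasurable aestronglyMeasurable_id).symm
  rw [h1, hmap, integral_smul_measure,
    show (∫ (x : ℝ), x ∂Measure.map f μ) = ∫ x, f x ∂μ from
      integral_map hf.aemeasurable aestronglyMeasurable_id,
    smul_eq_mul, mul_comm]

private lemma count_all (n n1 : ℕ) :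
    (Finset.univ.filter fun t : Fin n → Bool => countTreated t = n1).card = n.choose n1 := by
  classical
  have : (Finset.univ.filter fun t : Fin n → Bool => countTreated t = n1).card
      = ((Finset.univ : Finset (Fin n)).powersetCard n1).card := by
    refine Finset.card_bij' (fun t _ => Finset.univ.filter fun j => t j = true)
      (fun s _ => fun j => decide (j ∈ s)) ?_ ?_ ?_ ?_
    · intro t ht
      simp only [Finset.mem_filter, Finset.mem_univ, true_and] at ht
      simp only [Finset.mem_powersetCard]
      exact ⟨Finset.filter_subset _ _, ht⟩
    · intro s hs
      simp only [Finset.mem_powersetCard] at hs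
      simp only [Finset.mem_filter, Finset.mem_univ, true_and, countTreated]
      rw [← hs.2]
      refine Finset.mem_filter.mpr ⟨Finset.mem_univ _, ?_⟩
      congr 1
      ext x
      simp
    · intro t _
      funext j
      simp
    · intro s _
      ext x
      simp
  rw [this, Finset.card_powersetCard, Finset.card_univ, Fintype.card_fin]

private lemma count_treated_at (n n1 : ℕ) (hn1 : 0 < n1) (i : Fin n) :
    (Finset.univ.filter fun t : Fin n → Bool => countTreated t = n1 ∧ t i = true).card
      = (n-1).choose (n1-1) := by
  classical
  have : (Finset.univ.filter fun t : Fin n → Bool => countTreated t = n1 ∧ t i = true).card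
      = ((Finset.univ.erase i).powersetCard (n1-1)).card := by
    refine Finset.card_bij' (fun t _ => (Finset.univ.filter fun j => t j = true).erase i)
      (fun s _ => fun j => decide (j = i ∨ j ∈ s)) ?_ ?_ ?_ ?_
    · intro t ht
      simp only [Finset.mem_filter, Finset.mem_univ, true_and] at ht
      rw [Finset.mem_powersetCard]
      constructor
      · exact Finset.erase_subset_erase i (Finset.filter_subset _ _)
      · rw [Finset.card_erase_of_mem (by simp [ht.2]), ← ht.1]; rfl
    · intro s hs
      rw [Finset.mem_powersetCard] at hs
      have hsi : i ∉ s := fun h => (Finset.mem_erase.mp (hs.1 h)).1 rfl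
      simp only [Finset.mem_filter, Finset.mem_univ, true_and]
      constructor
      · have : (Finset.univ.filter fun j => (decide (j = i ∨ j ∈ s)) = true) = insert i s := by
          ext x; simp
        rw [countTreated, this, Finset.card_insert_of_notMem hsi, hs.2]
        omega
      · simp
    · intro t ht
      simp only [Finset.mem_filter, Finset.mem_univ, true_and] at ht
      funext j
      by_cases hj : j = i
      · subst hj; simp [ht.2]
      · simp [hj, ht.2, Finset.mem_erase]
    · intro s hs
      rw [Finset.mem_powersetCard] at hs
      have hsi : i ∉ s := fun h => (Finset.mem_erase.mp (hs.1 h)).1 rfl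
      ext x
      simp only [Finset.mem_erase, Finset.mem_filter, Finset.mem_univ, true_and,
        decide_eq_true_eq]
      constructor
      · rintro ⟨hx, (rfl | hx2)⟩
        · exact absurd rfl hx
        · exact hx2
      · intro hx
        exact ⟨fun h => hsi (h ▸ hx), Or.inr hx⟩
  rw [this, Finset.card_powersetCard, Finset.card_erase_of_mem (Finset.mem_univ i),
    Finset.card_univ, Fintype.card_fin]

private lemma exists_meas_version {Ω ι : Type} [MeasurableSpace Ω] [Fintype ι]
    (μ : Measure Ω) [IsProbabilityMeasure μ] (s : ι → Set Ω)
    (hcover : (⋃ t, s t) = univ) (hsum : ∑ t, μ (s t) = 1) :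
    ∃ K : ι → Set Ω, (∀ t, MeasurableSet (K t)) ∧ (∀ t, K t ⊆ s t) ∧
      (∀ t, μ (s t \ K t) = 0) ∧ Pairwise (Function.onFun Disjoint K) := by
  classical
  set H : ι → Set Ω := fun t => toMeasurable μ (s t) with hH
  have hHm : ∀ t, MeasurableSet (H t) := fun t => measurableSet_toMeasurable μ (s t)
  have hsH : ∀ t, s t ⊆ H t := fun t => subset_toMeasurable μ (s t)
  have hHμ : ∀ t, μ (H t) = μ (s t) := fun t => measure_toMeasurable (s t)
  set K : ι → Set Ω := fun t => H t \ ⋃ (t' : ι) (_ : t' ≠ t), H t' with hK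
  have hKm : ∀ t, MeasurableSet (K t) :=
    fun t => (hHm t).diff (MeasurableSet.iUnion fun t' => MeasurableSet.iUnion fun _ => hHm t')
  have hKs : ∀ t, K t ⊆ s t := by
    intro t x hx
    have hxu : x ∈ ⋃ t', s t' := hcover ▸ mem_univ x
    obtain ⟨t'', hxt⟩ := mem_iUnion.mp hxu
    rcases eq_or_ne t'' t with rfl | hne
    · exact hxt
    · exact absurd (mem_iUnion.mpr ⟨t'', mem_iUnion.mpr ⟨hne, hsH t'' hxt⟩⟩) hx.2
  have hKH : ∀ t, K t ⊆ H t := fun t => diff_subset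
  have hKdisj : Pairwise (Function.onFun Disjoint K) := by
    intro t t' hne
    refine Set.disjoint_left.mpr fun x hx hx' => ?_
    exact hx.2 (mem_iUnion.mpr ⟨t', mem_iUnion.mpr ⟨hne.symm, hx'.1⟩⟩)
  refine ⟨K, hKm, hKs, fun t => ?_, hKdisj⟩
  have hsumH : ∑ t', μ (H t') = 1 := by
    rw [show (∑ t', μ (H t')) = ∑ t', μ (s t') from Finset.sum_congr rfl fun t' _ => hHμ t']
    exact hsum
  have hle : μ (H t) ≤ μ (K t) := by
    have h1 : univ \ (⋃ (t' : ι) (_ : t' ≠ t), H t') ⊆ K t := by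
      intro x hx
      have hxu : x ∈ ⋃ t', s t' := hcover ▸ mem_univ x
      obtain ⟨t'', hxt⟩ := mem_iUnion.mp hxu
      rcases eq_or_ne t'' t with rfl | hne
      · exact ⟨hsH _ hxt, hx.2⟩
      · exact absurd (mem_iUnion.mpr ⟨t'', mem_iUnion.mpr ⟨hne, hsH t'' hxt⟩⟩) hx.2
    have h2 : (1 : ℝ≥0∞) ≤ μ (K t) + μ (⋃ (t' : ι) (_ : t' ≠ t), H t') := by
      calc (1 : ℝ≥0∞) = μ univ := (measure_univ).symm
        _ ≤ μ (K t ∪ ⋃ (t' : ι) (_ : t' ≠ t), H t') := by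
            refine measure_mono fun x _ => ?_
            by_cases hx : x ∈ ⋃ (t' : ι) (_ : t' ≠ t), H t'
            · exact Or.inr hx
            · exact Or.inl (h1 ⟨mem_univ x, hx⟩)
        _ ≤ _ := measure_union_le _ _
    have h3 : μ (⋃ (t' : ι) (_ : t' ≠ t), H t') ≤ ∑ t' ∈ Finset.univ.erase t, μ (H t') := by
      have : (⋃ (t' : ι) (_ : t' ≠ t), H t') = ⋃ t' ∈ Finset.univ.erase t, H t' := by
        ext x; simp [Finset.mem_erase]
      rw [this]
      exact measure_biUnion_finset_le _ _
    have h4 : μ (H t) + ∑ t' ∈ Finset.univ.erase t, μ (H t') = 1 := by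
      rw [← hsumH]
      exact Finset.add_sum_erase Finset.univ (fun t' => μ (H t')) (Finset.mem_univ t)
    have h5 : μ (H t) + ∑ t' ∈ Finset.univ.erase t, μ (H t')
        ≤ μ (K t) + ∑ t' ∈ Finset.univ.erase t, μ (H t') := by
      rw [h4]; exact le_trans h2 (add_le_add_right h3 _)
    have hfin : (∑ t' ∈ Finset.univ.erase t, μ (H t')) ≠ ∞ :=
      (ENNReal.sum_lt_top.mpr fun t' _ => (measure_lt_top μ _)).ne
    exact (ENNReal.add_le_add_iff_right hfin).mp h5
  have hmono : μ (s t \ K t) ≤ μ (H t \ K t) := measure_mono (diff_subset_diff_left (hsH t))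
  have hHK : μ (H t \ K t) = 0 := by
    rw [measure_diff (hKH t) (hKm t).nullMeasurableSet ((measure_lt_top μ _).ne)]
    exact tsub_eq_zero_of_le hle
  exact le_antisymm (hmono.trans hHK.le) zero_le


/-- under complete randomization of `n⁽¹⁾` treated units, outcomes
`Y_i = T_i·τ_i + F(G_{N_i}^T) + ε_i` with `F` iso-invariant and `ε_i ⫫ T`, `E[ε_i] = α`,
the average direct effect `(1/n) Σ_i E[Y_i(1,0_{−i}) − Y_i(0,0_{−i})]` is identified by
the weighted matched conditional contrasts. -/
theorem ade_identified_by_matched_contrasts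
    (n n1 : ℕ) (hn1 : 0 < n1) (hn1n : n1 < n)
    (G : SimpleGraph (Fin n))
    (Ω : Type) [MeasurableSpace Ω] (μ : Measure Ω) [IsProbabilityMeasure μ]
    (T : Ω → (Fin n → Bool))
    -- complete randomization: `T` uniform over assignments with exactly `n1` treated
    (hTunif : ∀ t : Fin n → Bool, countTreated t = n1 →
      μ {ω | T ω = t} = ((n.choose n1 : ℝ≥0∞))⁻¹)
    (hTsupp : ∀ t : Fin n → Bool, countTreated t ≠ n1 → μ {ω | T ω = t} = 0)
    (τ : Fin n → ℝ) (α : ℝ) (F : LGraph (Fin n) → ℝ) (ε : Fin n → Ω → ℝ)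
    (hF : ∀ g g' : LGraph (Fin n), g.Iso g' → F g = F g')
    (hε : ∀ i, Integrable (ε i) μ) (hεmean : ∀ i, ∫ ω, ε i ω ∂μ = α)
    (hind : ∀ i (B : Set ℝ), MeasurableSet B → ∀ t : Fin n → Bool,
      μ ({ω | ε i ω ∈ B} ∩ {ω | T ω = t}) = μ {ω | ε i ω ∈ B} * μ {ω | T ω = t})
    -- observed outcomes
    (Y : Fin n → Ω → ℝ)
    (hY : ∀ i ω, Y i ω = b2r (T ω i) * τ i + F (nbhdGraph G (T ω) i) + ε i ω)
    -- potential outcomes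
    (Ypot : Fin n → (Fin n → Bool) → Ω → ℝ)
    (hYpot : ∀ i t ω, Ypot i t ω = b2r (t i) * τ i + F (nbhdGraph G t i) + ε i ω)
    -- matched labeled graphs with positive-probability matching events
    (g : Fin n → LGraph (Fin n))
    (hA1 : ∀ i, 0 < μ {ω | (nbhdGraph G (T ω) i).Iso (g i) ∧ T ω i = true})
    (hA0 : ∀ i, 0 < μ {ω | (nbhdGraph G (T ω) i).Iso (g i) ∧ T ω i = false}) :
    (1 / (n1 : ℝ)) * ∑ i : Fin n, ∫ ω, b2r (T ω i) *
        (condExpEvent μ {ω' | (nbhdGraph G (T ω') i).Iso (g i) ∧ T ω' i = true} (Y i) -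
         condExpEvent μ {ω' | (nbhdGraph G (T ω') i).Iso (g i) ∧ T ω' i = false} (Y i)) ∂μ
      = (1 / (n : ℝ)) * ∑ i : Fin n,
          ∫ ω, (Ypot i (fun j => if j = i then true else false) ω -
                Ypot i (fun _ => false) ω) ∂μ  := by
  classical
  have hn : 0 < n := hn1.trans hn1n
  set C : ℕ := n.choose n1 with hCdef
  set D : ℕ := (n-1).choose (n1-1) with hDdef
  have hC0 : C ≠ 0 := (Nat.choose_pos hn1n.le).ne'
  set s : (Fin n → Bool) → Set Ω := fun t => {ω | T ω = t} with hsdef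
  have hcover : (⋃ t, s t) = Set.univ := by
    ext ω
    simp only [Set.mem_iUnion, Set.mem_univ, iff_true, hsdef, Set.mem_setOf_eq]
    exact ⟨T ω, rfl⟩
  have hμs : ∀ t, μ (s t) = if countTreated t = n1 then ((C : ℝ≥0∞))⁻¹ else 0 := by
    intro t
    split_ifs with h
    · exact hTunif t h
    · exact hTsupp t h
  have hsum : ∑ t, μ (s t) = 1 := by
    rw [Finset.sum_congr rfl fun t _ => hμs t, Finset.sum_ite, Finset.sum_const_zero,
      add_zero, Finset.sum_const, count_all n n1, nsmul_eq_mul]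
    exact ENNReal.mul_inv_cancel (Nat.cast_ne_zero.mpr hC0) (ENNReal.natCast_ne_top C)
  obtain ⟨K, hKm, hKs, hKnull, hKdisj⟩ := exists_meas_version μ s hcover hsum
  have hKae : ∀ t, s t =ᵐ[μ] K t := by
    intro t
    rw [ae_eq_set]
    exact ⟨hKnull t, by rw [Set.diff_eq_empty.mpr (hKs t)]; exact measure_empty⟩
  have hKμ : ∀ t, μ (K t) = μ (s t) := fun t => (measure_congr (hKae t)).symm
  set KS : Set (Fin n → Bool) → Set Ω := fun S => ⋃ t ∈ Finset.univ.filter (· ∈ S), K t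
    with hKSdef
  have hKSm : ∀ S, MeasurableSet (KS S) :=
    fun S => (Finset.univ.filter (· ∈ S)).measurableSet_biUnion fun t _ => hKm t
  have hpreae : ∀ S : Set (Fin n → Bool), (T ⁻¹' S : Set Ω) =ᵐ[μ] KS S := by
    intro S
    have h1 : T ⁻¹' S = ⋃ t, ⋃ (_ : t ∈ Finset.univ.filter (· ∈ S)), s t := by
      ext ω
      simp only [Set.mem_preimage, Set.mem_iUnion, Finset.mem_filter, Finset.mem_univ,
        true_and, hsdef, Set.mem_setOf_eq]
      exact ⟨fun h => ⟨T ω, h, rfl⟩, fun ⟨t, ht, h⟩ => h ▸ ht⟩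
    have h2 : KS S = ⋃ t, ⋃ (_ : t ∈ Finset.univ.filter (· ∈ S)), K t := rfl
    rw [h1, h2]
    exact EventuallyEq.countable_iUnion fun t =>
      EventuallyEq.countable_iUnion fun _ => hKae t
  have hKSdisj : ∀ S : Set (Fin n → Bool),
      Set.PairwiseDisjoint (↑(Finset.univ.filter (· ∈ S)) : Set (Fin n → Bool)) K :=
    fun S t _ t' _ hne => hKdisj hne
  have hμpre : ∀ S : Set (Fin n → Bool),
      μ (T ⁻¹' S) = ∑ t ∈ Finset.univ.filter (· ∈ S), μ (s t) := by
    intro S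
    rw [measure_congr (hpreae S), hKSdef]
    rw [measure_biUnion_finset (hKSdisj S) (fun t _ => hKm t)]
    exact Finset.sum_congr rfl fun t _ => hKμ t
  -- per-unit facts
  have hterm : ∀ i : Fin n,
      condExpEvent μ {ω' | (nbhdGraph G (T ω') i).Iso (g i) ∧ T ω' i = true} (Y i) -
        condExpEvent μ {ω' | (nbhdGraph G (T ω') i).Iso (g i) ∧ T ω' i = false} (Y i)
        = τ i := by
    intro i
    obtain ⟨ε', hε'm, hεae⟩ := (hε i).1
    have hε'meas : Measurable ε' := hε'm.measurable
    have hε'mean : ∫ ω, ε' ω ∂μ = α := by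
      rw [← integral_congr_ae hεae]; exact hεmean i
    have hBae : ∀ B : Set ℝ, (ε i ⁻¹' B : Set Ω) =ᵐ[μ] ε' ⁻¹' B := by
      intro B
      filter_upwards [hεae] with ω h
      exact congrArg (fun x => x ∈ B) h
    have hprodKS : ∀ S : Set (Fin n → Bool), ∀ B : Set ℝ, MeasurableSet B →
        μ (ε' ⁻¹' B ∩ KS S) = μ (ε' ⁻¹' B) * μ (KS S) := by
      intro S B hB
      have hone : ∀ t, μ (ε' ⁻¹' B ∩ K t) = μ (ε' ⁻¹' B) * μ (K t) := by
        intro t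
        have e1 : μ (ε' ⁻¹' B ∩ K t) = μ (ε i ⁻¹' B ∩ s t) :=
          measure_congr (ae_eq_set_inter (hBae B).symm (hKae t).symm)
        rw [e1, measure_congr (hBae B).symm, hKμ t]
        exact hind i B hB t
      have e2 : ε' ⁻¹' B ∩ KS S = ⋃ t ∈ Finset.univ.filter (· ∈ S), (ε' ⁻¹' B ∩ K t) := by
        rw [hKSdef]
        exact Set.inter_iUnion₂ _ _
      rw [e2, measure_biUnion_finset
          (fun t ht t' ht' hne => ((hKdisj hne).mono Set.inter_subset_right
            Set.inter_subset_right))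
          (fun t _ => (hε'meas hB).inter (hKm t)),
        Finset.sum_congr rfl fun t _ => hone t, ← Finset.mul_sum]
      congr 1
      rw [hKSdef]
      exact (measure_biUnion_finset (hKSdisj S) (fun t _ => hKm t)).symm
    have hintK : ∀ S : Set (Fin n → Bool),
        ∫ ω in KS S, ε' ω ∂μ = α * (μ (KS S)).toReal := by
      intro S
      rw [key_restrict_integral μ ε' hε'meas (KS S) (hprodKS S), hε'mean]
    have hYon : ∀ (S : Set (Fin n → Bool)) (c : ℝ),
        (∀ t ∈ S, (nbhdGraph G t i).Iso (g i)) → (∀ t ∈ S, b2r (t i) = c) →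
        ∫ ω in T ⁻¹' S, Y i ω ∂μ
          = (c * τ i + F (g i) + α) * (μ (T ⁻¹' S)).toReal := by
      intro S c hSiso hSc
      rw [Measure.restrict_congr_set (hpreae S)]
      have hsub : ∀ ω ∈ KS S, T ω ∈ S := by
        intro ω hω
        simp only [hKSdef, Set.mem_iUnion, Finset.mem_filter, Finset.mem_univ, true_and] at hω
        obtain ⟨t, htS, hωt⟩ := hω
        have hTt : T ω = t := hKs t hωt
        rw [hTt]
        exact htS
      have heqon : Set.EqOn (Y i) (fun ω => (c * τ i + F (g i)) + ε i ω) (KS S) := by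
        intro ω hω
        have hTS : T ω ∈ S := hsub ω hω
        rw [hY i ω, hSc _ hTS, hF _ _ (hSiso _ hTS)]
      rw [setIntegral_congr_fun (hKSm S) heqon,
        integral_add (integrable_const _) (hε i).restrict, setIntegral_const,
        integral_congr_ae (ae_restrict_of_ae hεae), hintK S,
        measure_congr (hpreae S)]
      rw [smul_eq_mul]
      simp only [measureReal_def]
      ring
    have hpos1 : (μ (T ⁻¹' ({t : Fin n → Bool |
        (nbhdGraph G t i).Iso (g i) ∧ t i = true}))).toReal ≠ 0 := by
      have h := hA1 i
      exact (ENNReal.toReal_pos h.ne' (measure_ne_top μ _)).ne'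
    have hpos0 : (μ (T ⁻¹' ({t : Fin n → Bool |
        (nbhdGraph G t i).Iso (g i) ∧ t i = false}))).toReal ≠ 0 := by
      have h := hA0 i
      exact (ENNReal.toReal_pos h.ne' (measure_ne_top μ _)).ne'
    have hcond1 : condExpEvent μ
        {ω' | (nbhdGraph G (T ω') i).Iso (g i) ∧ T ω' i = true} (Y i)
        = 1 * τ i + F (g i) + α := by
      rw [condExpEvent,
        show {ω' | (nbhdGraph G (T ω') i).Iso (g i) ∧ T ω' i = true}
          = T ⁻¹' {t : Fin n → Bool | (nbhdGraph G t i).Iso (g i) ∧ t i = true} from rfl,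
        hYon _ 1 (fun t ht => ht.1) (fun t ht => by simp [b2r, ht.2]),
        mul_div_cancel_right₀ _ hpos1]
    have hcond0 : condExpEvent μ
        {ω' | (nbhdGraph G (T ω') i).Iso (g i) ∧ T ω' i = false} (Y i)
        = 0 * τ i + F (g i) + α := by
      rw [condExpEvent,
        show {ω' | (nbhdGraph G (T ω') i).Iso (g i) ∧ T ω' i = false}
          = T ⁻¹' {t : Fin n → Bool | (nbhdGraph G t i).Iso (g i) ∧ t i = false} from rfl,
        hYon _ 0 (fun t ht => ht.1) (fun t ht => by simp [b2r, ht.2]),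
        mul_div_cancel_right₀ _ hpos0]
    rw [hcond1, hcond0]
    ring
  -- probability of treatment
  have hSiμ : ∀ i : Fin n, μ (T ⁻¹' {t : Fin n → Bool | t i = true})
      = (D : ℝ≥0∞) * ((C : ℝ≥0∞))⁻¹ := by
    intro i
    rw [hμpre, Finset.sum_filter]
    trans (∑ t : Fin n → Bool, if countTreated t = n1 ∧ t i = true then (C : ℝ≥0∞)⁻¹ else 0)
    · refine Finset.sum_congr rfl fun t _ => ?_
      by_cases h1 : countTreated t = n1 <;> by_cases h2 : t i = true <;>
        simp [hμs t, h1, h2]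
    · rw [← Finset.sum_filter, Finset.sum_const, count_treated_at n n1 hn1 i, nsmul_eq_mul,
        hDdef]
  have hbint : ∀ (i : Fin n) (c : ℝ), ∫ ω, b2r (T ω i) * c ∂μ
      = c * ((D : ℝ) / (C : ℝ)) := by
    intro i c
    have hfun : (fun ω => b2r (T ω i) * c)
        = Set.indicator (T ⁻¹' {t : Fin n → Bool | t i = true}) (fun _ => c) := by
      funext ω
      by_cases h : T ω i = true <;>
        simp [b2r, h, Set.indicator_apply, Set.mem_preimage, Set.mem_setOf_eq]
    rw [hfun]
    have hind2 : Set.indicator (T ⁻¹' {t : Fin n → Bool | t i = true}) (fun _ => c)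
        =ᵐ[μ] Set.indicator (KS {t : Fin n → Bool | t i = true}) (fun _ => c) := by
      filter_upwards [hpreae {t : Fin n → Bool | t i = true}] with ω hω
      simp only [Set.indicator_apply]
      exact if_congr (iff_of_eq hω) rfl rfl
    rw [integral_congr_ae hind2, integral_indicator_const _ (hKSm _), measureReal_def,
      ← measure_congr (hpreae {t : Fin n → Bool | t i = true}), hSiμ i,
      ENNReal.toReal_mul, ENNReal.toReal_inv, ENNReal.toReal_natCast,
      ENNReal.toReal_natCast, smul_eq_mul]
    ring
  -- RHS integrals
  have hRHS : ∀ i : Fin n, ∫ ω, (Ypot i (fun j => if j = i then true else false) ω -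
      Ypot i (fun _ => false) ω) ∂μ = τ i := by
    intro i
    have hiso : (nbhdGraph G (fun j => if j = i then true else false) i).Iso
        (nbhdGraph G (fun _ => false) i) := by
      refine ⟨Equiv.refl _, fun a b => Iff.rfl, fun a => ?_⟩
      have hne : (a : Fin n) ≠ i := by
        intro h
        have ha : G.Adj i (a : Fin n) := a.2
        rw [h] at ha
        exact G.loopless.irrefl i ha
      show (if (a : Fin n) = i then true else false) = false
      simp [hne]
    have hconst : (fun ω => Ypot i (fun j => if j = i then true else false) ω -
        Ypot i (fun _ => false) ω) = fun _ => τ i := by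
      funext ω
      rw [hYpot, hYpot, hF _ _ hiso]
      simp [b2r]
    rw [hconst, integral_const]
    simp
  -- assemble
  rw [Finset.sum_congr rfl fun i _ => by rw [hterm i, hbint i (τ i)],
    Finset.sum_congr rfl fun i _ => hRHS i]
  have hnat : n * D = n1 * C := by
    obtain ⟨m, rfl⟩ : ∃ m, n = m + 1 := ⟨n - 1, by omega⟩
    obtain ⟨k, rfl⟩ : ∃ k, n1 = k + 1 := ⟨n1 - 1, by omega⟩
    have h := Nat.add_one_mul_choose_eq m k
    simp only [hCdef, hDdef, Nat.add_sub_cancel]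
    linarith [h]
  have hfrac : (1 / (n1 : ℝ)) * ((D : ℝ) / (C : ℝ)) = 1 / (n : ℝ) := by
    have hC' : (C : ℝ) ≠ 0 := Nat.cast_ne_zero.mpr hC0
    have hn1' : (n1 : ℝ) ≠ 0 := Nat.cast_ne_zero.mpr hn1.ne'
    have hn' : (n : ℝ) ≠ 0 := Nat.cast_ne_zero.mpr hn.ne'
    have hid : (n : ℝ) * (D : ℝ) = (n1 : ℝ) * (C : ℝ) := by exact_mod_cast hnat
    field_simp
    linarith [hid]
  calc (1 / (n1 : ℝ)) * ∑ i : Fin n, τ i * ((D : ℝ) / (C : ℝ))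
      = ((1 / (n1 : ℝ)) * ((D : ℝ) / (C : ℝ))) * ∑ i : Fin n, τ i := by
        rw [← Finset.sum_mul]; ring
    _ = (1 / (n : ℝ)) * ∑ i : Fin n, τ i := by rw [hfrac]
end

section
/- Suppose there are N units, one designated vertex in each of N disjoint graphs on n vertices, where the graphs are drawn i.i.d. from a probability mass function p over simple graphs on n vertices, and independently within each graph a treatment vector is drawn uniformly from assignments with exactly n⁽¹⁾ of the n vertices treated (0 < n⁽¹⁾ < n), so in particular each designated vertex is treated with probability n⁽¹⁾/n. Unit i is a fixed treated target whose labeled neighborhood graph equals a fixed labeled graph h. Say j ∈ MG_i if T_j = 0 and d_w(h, G_{N_j}^{T_j}) ≤ d_w(h, G_{N_k}^{T_k}) for every candidate k ≠ i with T_k = 0. Then for any graph g on n vertices and treatment assignment t of g with exactly n⁽¹⁾ treated and the designated vertex of g untreated, P( j ∈ MG_i | T_j = t, G_{N_j}^{T_j} = g_{N_j}^t ) = ( n⁽¹⁾/n + ((n − n⁽¹⁾)/n)·C(g_{N_j}^t) )^{N−2}, where C(g_{N_j}^t) = P( d_w(h, G_{N_k}^{T_k}) ≥ d_w(h, g_{N_j}^t)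 | T_k = 0 ) for a single independently drawn candidate k. -/
open MeasureTheory
open scoped ENNReal Classical

/-- `Cval n1 v0 p w h gN = P( d_w(h, G_{N_k}^{T_k}) ≥ d_w(h, gN) | T_k = 0 )` for a single
candidate `k` whose graph is drawn from `p` and whose treatment is uniform over assignments
with exactly `n1` treated, conditioned on the designated vertex `v0` being untreated: the
conditional law puts mass `p(g')·binom(n−1, n1)⁻¹` on each pair `(g', t')` with `t'` having
`n1` treated units and `t' v0 = false`. -/
noncomputable def Cval {n : ℕ} (n1 : ℕ) (v0 : Fin n) (p : SimpleGraph (Fin n) → ℝ≥0∞)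
    (w : LClass (Fin n) → ℝ) (h : LGraph (Fin n)) (gN : LGraph (Fin n)) : ℝ :=
  ∑ g' : SimpleGraph (Fin n), ∑ t' : Fin n → Bool,
    if countTreated t' = n1 ∧ t' v0 = false ∧ dw w h gN ≤ dw w h (nbhdGraph g' t' v0)
    then (p g').toReal * (((n - 1).choose n1 : ℝ))⁻¹ else 0


/-! ### Auxiliary lemmas -/

open Finset in
lemma card_countTreated_all (n n1 : ℕ)
    [D : DecidablePred fun t : Fin n → Bool => countTreated t = n1] :
    ((Finset.univ : Finset (Fin n → Bool)).filter fun t => countTreated t = n1).card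
      = n.choose n1 := by
  classical
  have h : ((Finset.univ : Finset (Fin n → Bool)).filter fun t => countTreated t = n1).card
      = (Finset.powersetCard n1 (Finset.univ : Finset (Fin n))).card := by
    refine Finset.card_bij' (fun t _ => Finset.univ.filter fun v => t v = true)
      (fun s _ => fun v => decide (v ∈ s)) ?_ ?_ ?_ ?_
    · intro t ht
      simp only [mem_filter, mem_univ, true_and] at ht
      simp [Finset.mem_powersetCard, ← ht, countTreated]
    · intro s hs
      simp only [Finset.mem_powersetCard] at hs
      rw [mem_filter]
      simp only [mem_univ, true_and, countTreated]
      rw [← hs.2]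
      congr 1
      ext v
      simp
    · intro t ht
      funext v
      simp
    · intro s hs
      ext v
      simp
  rw [h, Finset.card_powersetCard, Finset.card_univ, Fintype.card_fin]

open Finset in
lemma card_countTreated_false (n n1 : ℕ) (v0 : Fin n)
    [D : DecidablePred fun t : Fin n → Bool => countTreated t = n1 ∧ t v0 = false] :
    ((Finset.univ : Finset (Fin n → Bool)).filter
      fun t => countTreated t = n1 ∧ t v0 = false).card = (n-1).choose n1 := by
  classical
  have h : ((Finset.univ : Finset (Fin n → Bool)).filter
        fun t => countTreated t = n1 ∧ t v0 = false).card
      = (Finset.powersetCard n1 ((Finset.univ : Finset (Fin n)).erase v0)).card := by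
    refine Finset.card_bij' (fun t _ => Finset.univ.filter fun v => t v = true)
      (fun s _ => fun v => decide (v ∈ s)) ?_ ?_ ?_ ?_
    · intro t ht
      simp only [mem_filter, mem_univ, true_and] at ht
      simp only [Finset.mem_powersetCard]
      constructor
      · intro v hv
        simp only [mem_filter, mem_univ, true_and] at hv
        simp only [Finset.mem_erase, mem_univ, and_true]
        rintro rfl
        rw [ht.2] at hv
        exact Bool.false_ne_true hv
      · exact ht.1
    · intro s hs
      simp only [Finset.mem_powersetCard] at hs
      rw [mem_filter]
      simp only [mem_univ, true_and, countTreated]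
      refine ⟨?_, ?_⟩
      · rw [← hs.2]; congr 1; ext v; simp
      · have hv : v0 ∉ s := fun hv => (Finset.mem_erase.mp (hs.1 hv)).1 rfl
        simp [hv]
    · intro t ht
      funext v
      simp
    · intro s hs
      ext v
      simp
  rw [h, Finset.card_powersetCard, Finset.card_erase_of_mem (mem_univ v0),
    Finset.card_univ, Fintype.card_fin]

lemma nat_id2 (n n1 : ℕ) (h2 : n1 < n) :
    n * (n-1).choose n1 = (n - n1) * n.choose n1 := by
  obtain ⟨m, rfl⟩ : ∃ m, n = m + 1 := ⟨n-1, by omega⟩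
  simp only [Nat.add_sub_cancel]
  have h1 := Nat.add_one_mul_choose_eq m n1
  have h2' := Nat.choose_succ_right_eq (m+1) n1
  rw [h1, h2', mul_comm]

/-- The weight of one configuration coordinate. -/
noncomputable def cfgWt {n : ℕ} (n1 : ℕ) (p : SimpleGraph (Fin n) → ℝ≥0∞)
    (x : SimpleGraph (Fin n) × (Fin n → Bool)) : ℝ≥0∞ :=
  if countTreated x.2 = n1 then p x.1 * ((n.choose n1 : ℝ≥0∞))⁻¹ else 0

lemma cfgWt_sum {n : ℕ} (n1 : ℕ) (hn1n : n1 ≤ n) (p : SimpleGraph (Fin n) → ℝ≥0∞)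
    (hp : ∑ g : SimpleGraph (Fin n), p g = 1) :
    ∑ x : SimpleGraph (Fin n) × (Fin n → Bool), cfgWt n1 p x = 1 := by
  classical
  rw [Fintype.sum_prod_type]
  have hcard : ((Finset.univ : Finset (Fin n → Bool)).filter
      fun t => countTreated t = n1).card = n.choose n1 := card_countTreated_all n n1
  have hc0 : (n.choose n1 : ℝ≥0∞) ≠ 0 := by
    exact_mod_cast (Nat.choose_pos hn1n).ne'
  have hct : (n.choose n1 : ℝ≥0∞) ≠ ⊤ := by simp
  calc ∑ g : SimpleGraph (Fin n), ∑ t : Fin n → Bool, cfgWt n1 p (g, t)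
      = ∑ g : SimpleGraph (Fin n), p g := by
        refine Finset.sum_congr rfl fun g _ => ?_
        simp only [cfgWt]
        rw [← Finset.sum_filter, Finset.sum_const, hcard, nsmul_eq_mul, mul_comm (p g),
          ← mul_assoc, ENNReal.mul_inv_cancel hc0 hct, one_mul]
    _ = 1 := hp

/-- Any event determined by the full configuration has measure given by summing the
product weights over configurations satisfying the defining predicate. -/
lemma measure_config {n N n1 : ℕ} (hn1n : n1 ≤ n)
    {Ω : Type} [MeasurableSpace Ω] (μ : Measure Ω) [IsProbabilityMeasure μ]
    (Gr : Fin N → Ω → SimpleGraph (Fin n))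
    (Tr : Fin N → Ω → (Fin n → Bool))
    (p : SimpleGraph (Fin n) → ℝ≥0∞) (hp : ∑ g : SimpleGraph (Fin n), p g = 1)
    (hiid : ∀ (gs : Fin N → SimpleGraph (Fin n)) (ts : Fin N → Fin n → Bool),
      (∀ k, countTreated (ts k) = n1) →
      μ {ω | ∀ k, Gr k ω = gs k ∧ Tr k ω = ts k} =
        ∏ k : Fin N, (p (gs k) * ((n.choose n1 : ℝ≥0∞))⁻¹))
    (hsupp : ∀ (k : Fin N) (t : Fin n → Bool), countTreated t ≠ n1 →
      μ {ω | Tr k ω = t} = 0)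
    (Q : (Fin N → SimpleGraph (Fin n) × (Fin n → Bool)) → Prop) :
    μ {ω | Q (fun k => (Gr k ω, Tr k ω))} =
      ∑ c : Fin N → SimpleGraph (Fin n) × (Fin n → Bool),
        if Q c then ∏ k, cfgWt n1 p (c k) else 0 := by
  classical
  have hatom : ∀ c : Fin N → SimpleGraph (Fin n) × (Fin n → Bool),
      μ {ω | ∀ k, Gr k ω = (c k).1 ∧ Tr k ω = (c k).2} = ∏ k, cfgWt n1 p (c k) := by
    intro c
    by_cases hc : ∀ k, countTreated (c k).2 = n1
    · rw [hiid (fun k => (c k).1) (fun k => (c k).2) hc]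
      exact Finset.prod_congr rfl fun k _ => by simp [cfgWt, hc k]
    · push_neg at hc
      obtain ⟨k, hk⟩ := hc
      have h1 : μ {ω | ∀ k, Gr k ω = (c k).1 ∧ Tr k ω = (c k).2} = 0 := by
        refine le_antisymm (le_trans (measure_mono ?_) (hsupp k (c k).2 hk).le) zero_le
        intro ω hω
        exact (hω k).2
      rw [h1]
      exact (Finset.prod_eq_zero (Finset.mem_univ k) (by simp [cfgWt, hk])).symm
  have hle : ∀ (Q' : (Fin N → SimpleGraph (Fin n) × (Fin n → Bool)) → Prop),
      μ {ω | Q' (fun k => (Gr k ω, Tr k ω))} ≤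
      ∑ c : Fin N → SimpleGraph (Fin n) × (Fin n → Bool),
        if Q' c then ∏ k, cfgWt n1 p (c k) else 0 := by
    intro Q'
    have hsub : {ω | Q' (fun k => (Gr k ω, Tr k ω))} ⊆
        ⋃ c : Fin N → SimpleGraph (Fin n) × (Fin n → Bool),
          if Q' c then {ω | ∀ k, Gr k ω = (c k).1 ∧ Tr k ω = (c k).2} else ∅ := by
      intro ω hω
      refine Set.mem_iUnion.mpr ⟨fun k => (Gr k ω, Tr k ω), ?_⟩
      have hq : Q' (fun k => (Gr k ω, Tr k ω)) := hω
      rw [if_pos hq]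
      exact fun k => ⟨rfl, rfl⟩
    calc μ {ω | Q' (fun k => (Gr k ω, Tr k ω))}
        ≤ ∑' c : Fin N → SimpleGraph (Fin n) × (Fin n → Bool),
            μ (if Q' c then {ω | ∀ k, Gr k ω = (c k).1 ∧ Tr k ω = (c k).2} else ∅) :=
          le_trans (measure_mono hsub) (measure_iUnion_le _)
      _ = ∑ c : Fin N → SimpleGraph (Fin n) × (Fin n → Bool),
            if Q' c then ∏ k, cfgWt n1 p (c k) else 0 := by
          rw [tsum_fintype]
          refine Finset.sum_congr rfl fun c _ => ?_
          by_cases hQ : Q' c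
          · rw [if_pos hQ, if_pos hQ, hatom]
          · rw [if_neg hQ, if_neg hQ, measure_empty]
  have htot : ∑ c : Fin N → SimpleGraph (Fin n) × (Fin n → Bool),
      ∏ k, cfgWt n1 p (c k) = 1 := by
    have hps := Finset.prod_univ_sum
      (fun _ : Fin N => (Finset.univ : Finset (SimpleGraph (Fin n) × (Fin n → Bool))))
      (fun _ x => cfgWt n1 p x)
    rw [Fintype.piFinset_univ] at hps
    rw [← hps]
    have hws : ∑ x : SimpleGraph (Fin n) × (Fin n → Bool), cfgWt n1 p x = 1 :=
      cfgWt_sum n1 hn1n p hp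
    simp [hws]
  set A := ∑ c : Fin N → SimpleGraph (Fin n) × (Fin n → Bool),
        if Q c then ∏ k, cfgWt n1 p (c k) else 0 with hA
  set B := ∑ c : Fin N → SimpleGraph (Fin n) × (Fin n → Bool),
        if ¬ Q c then ∏ k, cfgWt n1 p (c k) else 0 with hBdef
  have hAB : A + B = 1 := by
    rw [hA, hBdef, ← Finset.sum_add_distrib, ← htot]
    refine Finset.sum_congr rfl fun c _ => ?_
    by_cases hQ : Q c <;> simp [hQ]
  have hBtop : B ≠ ⊤ := by
    intro hb
    rw [hb, add_top] at hAB
    exact ENNReal.top_ne_one hAB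
  have h1 : (1 : ℝ≥0∞) ≤ μ {ω | Q (fun k => (Gr k ω, Tr k ω))} +
      μ {ω | ¬ Q (fun k => (Gr k ω, Tr k ω))} := by
    have hcover : (Set.univ : Set Ω) ⊆ {ω | Q (fun k => (Gr k ω, Tr k ω))} ∪
        {ω | ¬ Q (fun k => (Gr k ω, Tr k ω))} := fun ω _ => by
      by_cases hq : Q (fun k => (Gr k ω, Tr k ω))
      · exact Or.inl hq
      · exact Or.inr hq
    calc (1:ℝ≥0∞) = μ Set.univ := (measure_univ).symm
      _ ≤ _ := le_trans (measure_mono hcover) (measure_union_le _ _)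
  refine le_antisymm (hle Q) ?_
  have h2 : 1 - μ {ω | ¬ Q (fun k => (Gr k ω, Tr k ω))} ≤
      μ {ω | Q (fun k => (Gr k ω, Tr k ω))} := tsub_le_iff_right.mpr h1
  have h3 : A ≤ 1 - B := by
    rw [← hAB]; simp [hBtop, ENNReal.add_sub_cancel_right hBtop]
  calc A ≤ 1 - B := h3
    _ ≤ 1 - μ {ω | ¬ Q (fun k => (Gr k ω, Tr k ω))} := by
        rw [hBdef]
        have hh := tsub_le_tsub_left (hle (fun c => ¬ Q c)) 1
        convert hh using 4
        rfl
    _ ≤ _ := h2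

lemma sum_prod_fn {N : ℕ} {X : Type} [Fintype X] (f : Fin N → X → ℝ≥0∞) :
    ∑ c : Fin N → X, ∏ k, f k (c k) = ∏ k, ∑ x, f k x := by
  classical
  rw [Finset.prod_univ_sum (fun _ => (Finset.univ : Finset X)) f, Fintype.piFinset_univ]

lemma prod_ite_two {N : ℕ} (i j : Fin N) (hij : i ≠ j) (a b c : ℝ≥0∞) :
    (∏ k : Fin N, (if k = j then a else if k = i then b else c)) = a * b * c ^ (N - 2) := by
  classical
  rw [← Finset.mul_prod_erase Finset.univ _ (Finset.mem_univ j), if_pos rfl,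
    ← Finset.mul_prod_erase _ _ (Finset.mem_erase.mpr ⟨hij, Finset.mem_univ i⟩),
    if_neg hij, if_pos rfl]
  have hc : ∀ k ∈ (Finset.univ.erase j).erase i,
      (if k = j then a else if k = i then b else c) = c := by
    intro k hk
    rw [if_neg (Finset.mem_erase.mp (Finset.mem_erase.mp hk).2).1,
      if_neg (Finset.mem_erase.mp hk).1]
  rw [Finset.prod_congr rfl hc, Finset.prod_const]
  have hcard : ((Finset.univ.erase j).erase i).card = N - 2 := by
    rw [Finset.card_erase_of_mem (Finset.mem_erase.mpr ⟨hij, Finset.mem_univ i⟩),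
      Finset.card_erase_of_mem (Finset.mem_univ j), Finset.card_univ, Fintype.card_fin]
    omega
  rw [hcard, mul_assoc]

lemma sum_prod_single {N : ℕ} {X : Type} [Fintype X] (j : Fin N) (A : X → Prop)
    (wf : X → ℝ≥0∞) (hw1 : ∑ x, wf x = 1) :
    (∑ c : Fin N → X, if A (c j) then ∏ k, wf (c k) else 0)
      = ∑ x, if A x then wf x else 0 := by
  classical
  have h1 : ∀ c : Fin N → X, (if A (c j) then ∏ k, wf (c k) else 0)
      = ∏ k, (fun k x => if k = j then (if A x then wf x else 0) else wf x) k (c k) := by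
    intro c
    by_cases hA : A (c j)
    · rw [if_pos hA]
      refine Finset.prod_congr rfl fun k _ => ?_
      by_cases hk : k = j
      · subst hk; simp [hA]
      · simp [hk]
    · rw [if_neg hA]
      exact (Finset.prod_eq_zero (Finset.mem_univ j) (by simp [hA])).symm
  rw [Finset.sum_congr rfl fun c _ => h1 c,
    sum_prod_fn (fun k x => if k = j then (if A x then wf x else 0) else wf x)]
  have h2 : ∀ k : Fin N,
      (∑ x, (fun k x => if k = j then (if A x then wf x else 0) else wf x) k x)
      = if k = j then (∑ x, if A x then wf x else 0) else 1 := by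
    intro k
    by_cases hk : k = j
    · simp [hk]
    · simp only [if_neg hk, hw1]
  rw [Finset.prod_congr rfl fun k _ => h2 k]
  simp

lemma sum_prod_double {N : ℕ} {X : Type} [Fintype X] (i j : Fin N) (hij : i ≠ j)
    (A B : X → Prop) (wf : X → ℝ≥0∞) (hw1 : ∑ x, wf x = 1) :
    (∑ c : Fin N → X, if (A (c j) ∧ ∀ k, k ≠ i → k ≠ j → B (c k))
        then ∏ k, wf (c k) else 0)
      = (∑ x, if A x then wf x else 0) * (∑ x, if B x then wf x else 0) ^ (N - 2) := by
  classical
  have h1 : ∀ c : Fin N → X,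
      (if (A (c j) ∧ ∀ k, k ≠ i → k ≠ j → B (c k)) then ∏ k, wf (c k) else 0)
      = ∏ k, (fun k x => if k = j then (if A x then wf x else 0)
          else if k = i then wf x else (if B x then wf x else 0)) k (c k) := by
    intro c
    by_cases hA : A (c j)
    · by_cases hAll : ∀ k, k ≠ i → k ≠ j → B (c k)
      · rw [if_pos ⟨hA, hAll⟩]
        refine Finset.prod_congr rfl fun k _ => ?_
        by_cases hkj : k = j
        · subst hkj; simp [hA]
        · by_cases hki : k = i
          · subst hki; simp [hkj]
          · simp [hkj, hki, hAll k hki hkj]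
      · rw [if_neg (fun hand => hAll hand.2)]
        push_neg at hAll
        obtain ⟨k, hki, hkj, hnB⟩ := hAll
        exact (Finset.prod_eq_zero (Finset.mem_univ k) (by simp [hki, hkj, hnB])).symm
    · rw [if_neg (fun hand => hA hand.1)]
      exact (Finset.prod_eq_zero (Finset.mem_univ j) (by simp [hA])).symm
  rw [Finset.sum_congr rfl fun c _ => h1 c,
    sum_prod_fn (fun k x => if k = j then (if A x then wf x else 0)
      else if k = i then wf x else (if B x then wf x else 0))]
  have h2 : ∀ k : Fin N,
      (∑ x, (fun k x => if k = j then (if A x then wf x else 0)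
          else if k = i then wf x else (if B x then wf x else 0)) k x)
      = if k = j then (∑ x, if A x then wf x else 0)
        else if k = i then 1 else (∑ x, if B x then wf x else 0) := by
    intro k
    by_cases hkj : k = j
    · simp [hkj]
    · by_cases hki : k = i
      · simp [if_neg hkj, hki, hw1]
      · simp only [if_neg hkj, if_neg hki]
  rw [Finset.prod_congr rfl fun k _ => h2 k, prod_ite_two i j hij, mul_one]

lemma sum_ite_inst {α : Type} [Fintype α] (P : α → Prop) (D1 D2 : DecidablePred P)
    (f : α → ℝ≥0∞) :
    (∑ x, @ite _ (P x) (D1 x) (f x) 0) = ∑ x, @ite _ (P x) (D2 x) (f x) 0 := by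
  refine Finset.sum_congr rfl fun x _ => ?_
  rw [Subsingleton.elim (D1 x) (D2 x)]

set_option maxHeartbeats 2000000

/-- with `N` i.i.d. candidate graphs and independent uniform treatment of
exactly `n⁽¹⁾` units per graph, a treated target `i` with fixed labeled neighborhood `h`,
for any graph `g` and admissible assignment `t` (with `n⁽¹⁾` treated and the designated
vertex untreated),
`P(j ∈ MG_i | T_j = t, G_{N_j}^{T_j} = g_{N_j}^t) = (n⁽¹⁾/n + ((n−n⁽¹⁾)/n)·C(g_{N_j}^t))^{N−2}`. -/
theorem prob_in_matched_group
    (n N n1 : ℕ) (hn1 : 0 < n1) (hn1n : n1 < n)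
    (v0 : Fin n)                              -- the designated vertex of each graph
    (Ω : Type) [MeasurableSpace Ω] (μ : Measure Ω) [IsProbabilityMeasure μ]
    (Gr : Fin N → Ω → SimpleGraph (Fin n))    -- the N candidate graphs
    (Tr : Fin N → Ω → (Fin n → Bool))         -- the N treatment vectors
    (p : SimpleGraph (Fin n) → ℝ≥0∞) (hp : ∑ g : SimpleGraph (Fin n), p g = 1)
    (hiid : ∀ (gs : Fin N → SimpleGraph (Fin n)) (ts : Fin N → Fin n → Bool),
      (∀ k, countTreated (ts k) = n1) →
      μ {ω | ∀ k, Gr k ω = gs k ∧ Tr k ω = ts k} =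
        ∏ k : Fin N, (p (gs k) * ((n.choose n1 : ℝ≥0∞))⁻¹))
    (hsupp : ∀ (k : Fin N) (t : Fin n → Bool), countTreated t ≠ n1 →
      μ {ω | Tr k ω = t} = 0)
    (i j : Fin N) (hij : i ≠ j)
    (h : LGraph (Fin n))                      -- the target's fixed labeled neighborhood
    (w : LClass (Fin n) → ℝ) (hw : ∀ c, 0 ≤ w c)
    (g : SimpleGraph (Fin n)) (t : Fin n → Bool)
    (ht : countTreated t = n1) (htv0 : t v0 = false)
    -- the conditioning event has positive probability
    (hB : μ {ω | Tr j ω = t ∧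
      nbhdGraph (Gr j ω) (Tr j ω) v0 = nbhdGraph g t v0} ≠ 0) :
    (μ ({ω | Tr j ω v0 = false ∧ ∀ k : Fin N, k ≠ i → Tr k ω v0 = false →
          dw w h (nbhdGraph (Gr j ω) (Tr j ω) v0) ≤
            dw w h (nbhdGraph (Gr k ω) (Tr k ω) v0)} ∩
        {ω | Tr j ω = t ∧ nbhdGraph (Gr j ω) (Tr j ω) v0 = nbhdGraph g t v0}) /
      μ {ω | Tr j ω = t ∧ nbhdGraph (Gr j ω) (Tr j ω) v0 = nbhdGraph g t v0}).toReal =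
      ((n1 : ℝ) / (n : ℝ) + (((n : ℝ) - (n1 : ℝ)) / (n : ℝ)) *
        Cval n1 v0 p w h (nbhdGraph g t v0)) ^ (N - 2) := by
  classical
  have hcn0 : (n.choose n1 : ℝ≥0∞) ≠ 0 := by
    exact_mod_cast (Nat.choose_pos hn1n.le).ne'
  have hw1 : ∑ x : SimpleGraph (Fin n) × (Fin n → Bool), cfgWt n1 p x = 1 :=
    cfgWt_sum n1 hn1n.le p hp
  set Rc : SimpleGraph (Fin n) × (Fin n → Bool) → Prop :=
    fun x => x.2 = t ∧ nbhdGraph x.1 x.2 v0 = nbhdGraph g t v0 with hRc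
  set Pc : SimpleGraph (Fin n) × (Fin n → Bool) → Prop :=
    fun x => x.2 v0 = false →
      dw w h (nbhdGraph g t v0) ≤ dw w h (nbhdGraph x.1 x.2 v0) with hPc
  -- the denominator
  have hden : μ {ω | Tr j ω = t ∧ nbhdGraph (Gr j ω) (Tr j ω) v0 = nbhdGraph g t v0}
      = ∑ x : SimpleGraph (Fin n) × (Fin n → Bool), if Rc x then cfgWt n1 p x else 0 := by
    have h0 : {ω | Tr j ω = t ∧ nbhdGraph (Gr j ω) (Tr j ω) v0 = nbhdGraph g t v0}
        = {ω | (fun c : Fin N → SimpleGraph (Fin n) × (Fin n → Bool) =>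
            Rc (c j)) (fun k => (Gr k ω, Tr k ω))} := rfl
    rw [h0, measure_config hn1n.le μ Gr Tr p hp hiid hsupp
      (fun c : Fin N → SimpleGraph (Fin n) × (Fin n → Bool) => Rc (c j))]
    exact (sum_prod_single j Rc _ hw1).trans (sum_ite_inst Rc _ _ _)
  -- the numerator
  have hnum : μ ({ω | Tr j ω v0 = false ∧ ∀ k : Fin N, k ≠ i → Tr k ω v0 = false →
          dw w h (nbhdGraph (Gr j ω) (Tr j ω) v0) ≤
            dw w h (nbhdGraph (Gr k ω) (Tr k ω) v0)} ∩
        {ω | Tr j ω = t ∧ nbhdGraph (Gr j ω) (Tr j ω) v0 = nbhdGraph g t v0})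
      = (∑ x : SimpleGraph (Fin n) × (Fin n → Bool), if Rc x then cfgWt n1 p x else 0)
        * (∑ x : SimpleGraph (Fin n) × (Fin n → Bool),
            if Pc x then cfgWt n1 p x else 0) ^ (N - 2) := by
    have h0 : ({ω | Tr j ω v0 = false ∧ ∀ k : Fin N, k ≠ i → Tr k ω v0 = false →
          dw w h (nbhdGraph (Gr j ω) (Tr j ω) v0) ≤
            dw w h (nbhdGraph (Gr k ω) (Tr k ω) v0)} ∩
        {ω | Tr j ω = t ∧ nbhdGraph (Gr j ω) (Tr j ω) v0 = nbhdGraph g t v0})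
        = {ω | (fun c : Fin N → SimpleGraph (Fin n) × (Fin n → Bool) =>
            ((c j).2 v0 = false ∧ ∀ k : Fin N, k ≠ i → (c k).2 v0 = false →
              dw w h (nbhdGraph (c j).1 (c j).2 v0) ≤
                dw w h (nbhdGraph (c k).1 (c k).2 v0)) ∧
            ((c j).2 = t ∧ nbhdGraph (c j).1 (c j).2 v0 = nbhdGraph g t v0))
            (fun k => (Gr k ω, Tr k ω))} := rfl
    rw [h0, measure_config hn1n.le μ Gr Tr p hp hiid hsupp
      (fun c : Fin N → SimpleGraph (Fin n) × (Fin n → Bool) =>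
        ((c j).2 v0 = false ∧ ∀ k : Fin N, k ≠ i → (c k).2 v0 = false →
          dw w h (nbhdGraph (c j).1 (c j).2 v0) ≤
            dw w h (nbhdGraph (c k).1 (c k).2 v0)) ∧
        ((c j).2 = t ∧ nbhdGraph (c j).1 (c j).2 v0 = nbhdGraph g t v0))]
    have hkey : ∀ c : Fin N → SimpleGraph (Fin n) × (Fin n → Bool),
        (((c j).2 v0 = false ∧ ∀ k : Fin N, k ≠ i → (c k).2 v0 = false →
            dw w h (nbhdGraph (c j).1 (c j).2 v0) ≤
              dw w h (nbhdGraph (c k).1 (c k).2 v0)) ∧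
          ((c j).2 = t ∧ nbhdGraph (c j).1 (c j).2 v0 = nbhdGraph g t v0))
        ↔ (Rc (c j) ∧ ∀ k, k ≠ i → k ≠ j → Pc (c k)) := by
      intro c
      constructor
      · rintro ⟨⟨hv, hall⟩, hjt, hjg⟩
        refine ⟨⟨hjt, hjg⟩, fun k hki hkj hkv => ?_⟩
        have hdd := hall k hki hkv
        rwa [hjg] at hdd
      · rintro ⟨⟨hjt, hjg⟩, hall⟩
        refine ⟨⟨?_, fun k hki hkv => ?_⟩, hjt, hjg⟩
        · rw [hjt, htv0]
        · by_cases hkj : k = j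
          · subst hkj; exact le_refl _
          · rw [hjg]; exact hall k hki hkj hkv
    refine Eq.trans (Finset.sum_congr rfl fun c _ => ?_)
      ((sum_prod_double i j hij Rc Pc _ hw1).trans
        (congrArg₂ (fun a b => a * b ^ (N - 2)) (sum_ite_inst Rc _ _ _)
          (sum_ite_inst Pc _ _ _)))
    by_cases hq : Rc (c j) ∧ ∀ k, k ≠ i → k ≠ j → Pc (c k)
    · rw [if_pos ((hkey c).mpr hq), if_pos hq]
    · rw [if_neg (fun hh => hq ((hkey c).mp hh)), if_neg hq]
  rw [hnum, hden]
  set βS := ∑ x : SimpleGraph (Fin n) × (Fin n → Bool),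
    if Rc x then cfgWt n1 p x else 0 with hβS
  set qS := ∑ x : SimpleGraph (Fin n) × (Fin n → Bool),
    if Pc x then cfgWt n1 p x else 0 with hqS
  have hβ0 : βS ≠ 0 := hden ▸ hB
  have hβ1 : βS ≤ 1 := by
    rw [hβS, ← hw1]
    exact Finset.sum_le_sum fun x _ => by split_ifs <;> simp
  have hβt : βS ≠ ⊤ := ne_top_of_le_ne_top ENNReal.one_ne_top hβ1
  rw [mul_comm, mul_div_assoc, ENNReal.div_self hβ0 hβt, mul_one, ENNReal.toReal_pow]
  congr 1
  -- it remains to compute qS.toReal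
  have hptop : ∀ g' : SimpleGraph (Fin n), p g' ≠ ⊤ := by
    intro g'
    refine ne_top_of_le_ne_top ENNReal.one_ne_top ?_
    rw [← hp]
    exact Finset.single_le_sum (fun _ _ => zero_le) (Finset.mem_univ g')
  have hwtop : ∀ x : SimpleGraph (Fin n) × (Fin n → Bool), cfgWt n1 p x ≠ ⊤ := by
    intro x
    unfold cfgWt
    split_ifs
    · exact ENNReal.mul_ne_top (hptop _) (ENNReal.inv_ne_top.mpr hcn0)
    · simp
  have hpr1 : ∑ g' : SimpleGraph (Fin n), (p g').toReal = 1 := by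
    have hh := ENNReal.toReal_sum (s := Finset.univ) (f := p) (fun a _ => hptop a)
    rw [hp] at hh
    simpa using hh.symm
  have hcnR0 : ((n.choose n1 : ℕ) : ℝ) ≠ 0 :=
    Nat.cast_ne_zero.mpr (Nat.choose_pos hn1n.le).ne'
  have hcmR0 : (((n-1).choose n1 : ℕ) : ℝ) ≠ 0 :=
    Nat.cast_ne_zero.mpr (Nat.choose_pos (by omega)).ne'
  have hnR0 : (n : ℝ) ≠ 0 := Nat.cast_ne_zero.mpr (by omega)
  have hid2R : (n : ℝ) * (((n-1).choose n1 : ℕ) : ℝ)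
      = ((n : ℝ) - (n1 : ℝ)) * ((n.choose n1 : ℕ) : ℝ) := by
    have hid := nat_id2 n n1 hn1n
    have hcast := congrArg (Nat.cast : ℕ → ℝ) hid
    push_cast [Nat.cast_sub hn1n.le] at hcast
    exact hcast
  -- express qS.toReal as a real sum
  have hqR : qS.toReal = ∑ x : SimpleGraph (Fin n) × (Fin n → Bool),
      if countTreated x.2 = n1 ∧ Pc x then (p x.1).toReal * ((n.choose n1 : ℝ))⁻¹ else 0 := by
    rw [hqS, ENNReal.toReal_sum (fun x _ => by split_ifs; exacts [hwtop x, ENNReal.zero_ne_top])]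
    refine Finset.sum_congr rfl fun x _ => ?_
    by_cases hPx : Pc x
    · rw [if_pos hPx]
      unfold cfgWt
      by_cases hcx : countTreated x.2 = n1
      · rw [if_pos hcx, if_pos ⟨hcx, hPx⟩, ENNReal.toReal_mul, ENNReal.toReal_inv]
        norm_num
      · rw [if_neg hcx, if_neg (fun hc => hcx hc.1)]
        simp
    · rw [if_neg hPx, if_neg (fun hc => hPx hc.2)]
      simp
  -- split the sum in three parts
  have hsplit : ∀ x : SimpleGraph (Fin n) × (Fin n → Bool),
      (if countTreated x.2 = n1 ∧ Pc x then (p x.1).toReal * ((n.choose n1 : ℝ))⁻¹ else 0)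
      = ((if countTreated x.2 = n1 then (p x.1).toReal * ((n.choose n1 : ℝ))⁻¹ else 0)
          - (if countTreated x.2 = n1 ∧ x.2 v0 = false
              then (p x.1).toReal * ((n.choose n1 : ℝ))⁻¹ else 0))
        + (if countTreated x.2 = n1 ∧ x.2 v0 = false ∧
              dw w h (nbhdGraph g t v0) ≤ dw w h (nbhdGraph x.1 x.2 v0)
            then (p x.1).toReal * ((n.choose n1 : ℝ))⁻¹ else 0) := by
    intro x
    by_cases hxv : x.2 v0 = false
    · by_cases hc : countTreated x.2 = n1 <;>
        by_cases hd : dw w h (nbhdGraph g t v0) ≤ dw w h (nbhdGraph x.1 x.2 v0) <;>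
        simp [hPc, hxv, hc, hd]
    · have hxv' : x.2 v0 = true := by
        revert hxv; cases x.2 v0 <;> simp
      by_cases hc : countTreated x.2 = n1 <;> simp [hPc, hxv', hc]
  have hstep : (∑ x : SimpleGraph (Fin n) × (Fin n → Bool),
        if countTreated x.2 = n1 ∧ Pc x then (p x.1).toReal * ((n.choose n1 : ℝ))⁻¹ else 0)
      = ((∑ x : SimpleGraph (Fin n) × (Fin n → Bool),
            if countTreated x.2 = n1 then (p x.1).toReal * ((n.choose n1 : ℝ))⁻¹ else 0)
          - (∑ x : SimpleGraph (Fin n) × (Fin n → Bool),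
              if countTreated x.2 = n1 ∧ x.2 v0 = false
                then (p x.1).toReal * ((n.choose n1 : ℝ))⁻¹ else 0))
        + (∑ x : SimpleGraph (Fin n) × (Fin n → Bool),
            if countTreated x.2 = n1 ∧ x.2 v0 = false ∧
                dw w h (nbhdGraph g t v0) ≤ dw w h (nbhdGraph x.1 x.2 v0)
              then (p x.1).toReal * ((n.choose n1 : ℝ))⁻¹ else 0) := by
    rw [← Finset.sum_sub_distrib, ← Finset.sum_add_distrib]
    exact Finset.sum_congr rfl fun x _ => hsplit x
  -- evaluate the three parts
  have hSa : (∑ x : SimpleGraph (Fin n) × (Fin n → Bool),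
      if countTreated x.2 = n1 then (p x.1).toReal * ((n.choose n1 : ℝ))⁻¹ else 0) = 1 := by
    rw [Fintype.sum_prod_type]
    refine Eq.trans (Finset.sum_congr rfl fun g' _ => ?_) hpr1
    show (∑ t' : Fin n → Bool,
        if countTreated t' = n1 then (p g').toReal * ((n.choose n1 : ℝ))⁻¹ else 0)
      = (p g').toReal
    rw [← Finset.sum_filter, Finset.sum_const, card_countTreated_all, nsmul_eq_mul,
      show ((n.choose n1 : ℕ) : ℝ) * ((p g').toReal * ((n.choose n1 : ℝ))⁻¹)
        = (p g').toReal * (((n.choose n1 : ℕ) : ℝ) * ((n.choose n1 : ℝ))⁻¹) from by ring,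
      mul_inv_cancel₀ hcnR0, mul_one]
  have hSb : (∑ x : SimpleGraph (Fin n) × (Fin n → Bool),
      if countTreated x.2 = n1 ∧ x.2 v0 = false
        then (p x.1).toReal * ((n.choose n1 : ℝ))⁻¹ else 0)
      = (((n-1).choose n1 : ℕ) : ℝ) * ((n.choose n1 : ℝ))⁻¹ := by
    rw [Fintype.sum_prod_type]
    refine Eq.trans (Finset.sum_congr rfl fun g' _ => ?_)
      (by rw [← Finset.sum_mul, hpr1, one_mul])
    show (∑ t' : Fin n → Bool,
        if countTreated t' = n1 ∧ t' v0 = false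
          then (p g').toReal * ((n.choose n1 : ℝ))⁻¹ else 0)
      = (p g').toReal * ((((n-1).choose n1 : ℕ) : ℝ) * ((n.choose n1 : ℝ))⁻¹)
    rw [← Finset.sum_filter, Finset.sum_const, card_countTreated_false, nsmul_eq_mul]
    ring
  have hSc : (∑ x : SimpleGraph (Fin n) × (Fin n → Bool),
      if countTreated x.2 = n1 ∧ x.2 v0 = false ∧
          dw w h (nbhdGraph g t v0) ≤ dw w h (nbhdGraph x.1 x.2 v0)
        then (p x.1).toReal * ((n.choose n1 : ℝ))⁻¹ else 0)
      = (((n : ℝ) - (n1 : ℝ)) / (n : ℝ)) * Cval n1 v0 p w h (nbhdGraph g t v0) := by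
    have hfac : ((n.choose n1 : ℝ))⁻¹
        = (((n : ℝ) - (n1 : ℝ)) / (n : ℝ)) * (((n-1).choose n1 : ℝ))⁻¹ := by
      field_simp
      nlinarith [hid2R]
    have hpt : ∀ x : SimpleGraph (Fin n) × (Fin n → Bool),
        (if countTreated x.2 = n1 ∧ x.2 v0 = false ∧
            dw w h (nbhdGraph g t v0) ≤ dw w h (nbhdGraph x.1 x.2 v0)
          then (p x.1).toReal * ((n.choose n1 : ℝ))⁻¹ else 0)
        = (((n : ℝ) - (n1 : ℝ)) / (n : ℝ)) *
          (if countTreated x.2 = n1 ∧ x.2 v0 = false ∧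
              dw w h (nbhdGraph g t v0) ≤ dw w h (nbhdGraph x.1 x.2 v0)
            then (p x.1).toReal * (((n-1).choose n1 : ℝ))⁻¹ else 0) := by
      intro x
      split_ifs
      · rw [hfac]; ring
      · rw [mul_zero]
    rw [Finset.sum_congr rfl fun x _ => hpt x, ← Finset.mul_sum]
    congr 1
    rw [Fintype.sum_prod_type]
    simp only [Cval]
  rw [hqR]
  rw [hstep]
  rw [hSa]
  rw [hSb]
  rw [hSc]
  have harith : (1 : ℝ) - (((n-1).choose n1 : ℕ) : ℝ) * ((n.choose n1 : ℝ))⁻¹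
      = (n1 : ℝ) / (n : ℝ) := by
    field_simp
    nlinarith [hid2R]
  rw [harith]
end
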